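/- In the exterior algebra on n generators, for any non-crossing pairing C = ((i_1,j_1),...,(i_k,j_k)), the element Δ_C = Π_r (θ_{j_r} - θ_{i_r}) satisfies (Σ_{1 ≤ i < j ≤ n} ∂_{θ_j} ∂_{θ_i}) Δ_C = 0. -/

import Mathlib

open ExteriorAlgebra

/-- The generator `θ_i` of the exterior algebra `Λ(ℚ^n)`. -/
noncomputable def theta (n : ℕ) (i : Fin n) : ExteriorAlgebra ℚ (Fin n → ℚ) :=
  ExteriorAlgebra.ι ℚ (Pi.single i (1 : ℚ))

/-- The interior-product operator `∂_{θ_i}` on `Λ(ℚ^n)`: left contraction with the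
`i`-th coordinate functional.  On monomials it satisfies
`∂_{θ_i}(θ_A) = (-1)^{#{j ∈ A : j < i}} θ_{A∖{i}}` if `i ∈ A` and `0` otherwise. -/
noncomputable def pd (n : ℕ) (i : Fin n) :
    ExteriorAlgebra ℚ (Fin n → ℚ) →ₗ[ℚ] ExteriorAlgebra ℚ (Fin n → ℚ) :=
  CliffordAlgebra.contractLeft (Q := (0 : QuadraticForm ℚ (Fin n → ℚ)))
    (LinearMap.proj i)

/-- `C = ((i_1,j_1),…,(i_k,j_k))` is a non-crossing pairing: `i_r < j_r`, and any two
pairs are either disjoint (`i_r < j_r < i_s < j_s`) or nested (`i_s < i_r < j_r < j_s`). -/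
def IsNonCrossingPairing {n k : ℕ} (C : Fin k → Fin n × Fin n) : Prop :=
  (∀ r, (C r).1 < (C r).2) ∧
  ∀ r s : Fin k, r < s →
    ((C r).1 < (C r).2 ∧ (C r).2 < (C s).1 ∧ (C s).1 < (C s).2) ∨
    ((C s).1 < (C r).1 ∧ (C r).1 < (C r).2 ∧ (C r).2 < (C s).2)

/-- `Δ_C = (θ_{j_1} - θ_{i_1})(θ_{j_2} - θ_{i_2}) ⋯ (θ_{j_k} - θ_{i_k})`. -/
noncomputable def DeltaC {n k : ℕ} (C : Fin k → Fin n × Fin n) :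
    ExteriorAlgebra ℚ (Fin n → ℚ) :=
  (List.ofFn (fun r => theta n (C r).2 - theta n (C r).1)).prod
lemma pd_one (n : ℕ) (i : Fin n) : pd n i 1 = 0 :=
  CliffordAlgebra.contractLeft_one _ _

lemma pd_iota_mul (n : ℕ) (c : Fin n) (m : Fin n → ℚ) (x : ExteriorAlgebra ℚ (Fin n → ℚ)) :
    pd n c (ExteriorAlgebra.ι ℚ m * x) = m c • x - ExteriorAlgebra.ι ℚ m * pd n c x :=
  CliffordAlgebra.contractLeft_ι_mul _ _ _

lemma pd_prod_zero (n : ℕ) (c : Fin n) :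
    ∀ L : List (Fin n → ℚ), (∀ m ∈ L, m c = 0) →
      pd n c (L.map (ExteriorAlgebra.ι ℚ)).prod = 0
  | [], _ => by simpa using pd_one n c
  | m :: L, h => by
    rw [List.map_cons, List.prod_cons, pd_iota_mul, h m List.mem_cons_self,
        pd_prod_zero n c L (fun v hv => h v (List.mem_cons_of_mem _ hv)),
        zero_smul, mul_zero, sub_zero]

lemma key_sum {M : Type*} [AddCommGroup M] [Module ℚ M] {n : ℕ} (a b : Fin n)
    (hab : a < b) (m : Fin n → ℚ)
    (hm : ∀ c, m c = (if c = b then (1 : ℚ) else 0) - (if c = a then 1 else 0))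
    (g : Fin n → M) (hg : ∀ c, a ≤ c → c ≤ b → g c = 0) :
    ∑ p ∈ Finset.univ.filter (fun p : Fin n × Fin n => p.1 < p.2),
      (m p.1 • g p.2 - m p.2 • g p.1) = 0 := by
  rw [Finset.sum_sub_distrib]
  have coeff : ∀ s : Finset (Fin n), ∑ i ∈ s, m i
      = (if b ∈ s then (1 : ℚ) else 0) - (if a ∈ s then 1 else 0) := by
    intro s
    simp only [hm, Finset.sum_sub_distrib]
    rw [Finset.sum_ite_eq' s b (fun _ => (1 : ℚ)), Finset.sum_ite_eq' s a (fun _ => (1 : ℚ))]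
  have h1 : ∑ p ∈ Finset.univ.filter (fun p : Fin n × Fin n => p.1 < p.2),
      m p.1 • g p.2 = 0 := by
    rw [Finset.sum_filter, Fintype.sum_prod_type]
    rw [Finset.sum_comm]
    refine Finset.sum_eq_zero fun j _ => ?_
    have e : ∀ i : Fin n, (if i < j then m i • g j else 0)
        = (if i < j then m i else 0) • g j := by
      intro i; split <;> simp
    calc ∑ i : Fin n, (if i < j then m i • g j else 0)
        = (∑ i : Fin n, if i < j then m i else 0) • g j := by
          rw [Finset.sum_smul]; exact Finset.sum_congr rfl fun i _ => e i
      _ = 0 := by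
          rw [← Finset.sum_filter, coeff]
          simp only [Finset.mem_filter, Finset.mem_univ, true_and]
          by_cases hbj : b < j
          · have haj : a < j := hab.trans hbj
            simp [hbj, haj]
          · by_cases haj : a < j
            · rw [hg j haj.le (not_lt.1 hbj), smul_zero]
            · simp [hbj, haj]
  have h2 : ∑ p ∈ Finset.univ.filter (fun p : Fin n × Fin n => p.1 < p.2),
      m p.2 • g p.1 = 0 := by
    rw [Finset.sum_filter, Fintype.sum_prod_type]
    refine Finset.sum_eq_zero fun i _ => ?_
    have e : ∀ j : Fin n, (if i < j then m j • g i else 0)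
        = (if i < j then m j else 0) • g i := by
      intro j; split <;> simp
    calc ∑ j : Fin n, (if i < j then m j • g i else 0)
        = (∑ j : Fin n, if i < j then m j else 0) • g i := by
          rw [Finset.sum_smul]; exact Finset.sum_congr rfl fun j _ => e j
      _ = 0 := by
          rw [← Finset.sum_filter, coeff]
          simp only [Finset.mem_filter, Finset.mem_univ, true_and]
          by_cases hia : i < a
          · have hib : i < b := hia.trans hab
            simp [hia, hib]
          · by_cases hib : i < b
            · rw [hg i (not_lt.1 hia) hib.le, smul_zero]
            · simp [hia, hib]
  rw [h1, h2, sub_zero]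

lemma main_aux (n : ℕ) : ∀ (k : ℕ) (C : Fin k → Fin n × Fin n), IsNonCrossingPairing C →
    ∑ p ∈ Finset.univ.filter (fun p : Fin n × Fin n => p.1 < p.2),
        pd n p.2 (pd n p.1 (DeltaC C)) = 0
  | 0, C, _ => by
      have h : DeltaC C = 1 := by simp [DeltaC]
      rw [h]
      exact Finset.sum_eq_zero fun p _ => by rw [pd_one, map_zero]
  | (k + 1), C, hC => by
      have hab : (C 0).1 < (C 0).2 := hC.1 0
      set a := (C 0).1 with ha
      set b := (C 0).2 with hb
      set m : Fin n → ℚ := Pi.single b 1 - Pi.single a 1 with hm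
      set C' : Fin k → Fin n × Fin n := fun r => C r.succ with hC'def
      have hC' : IsNonCrossingPairing C' :=
        ⟨fun r => hC.1 r.succ,
         fun r s hrs => hC.2 r.succ s.succ (Fin.succ_lt_succ_iff.2 hrs)⟩
      have hsplit : DeltaC C = ExteriorAlgebra.ι ℚ m * DeltaC C' := by
        rw [DeltaC, List.ofFn_succ, List.prod_cons]
        congr 1
        rw [theta, theta, ← map_sub, hm, ha, hb]
      have hy : ∀ c : Fin n, a ≤ c → c ≤ b → pd n c (DeltaC C') = 0 := by
        intro c hac hcb
        have hrepr : DeltaC C'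
            = ((List.ofFn fun r : Fin k =>
                Pi.single (C' r).2 (1 : ℚ) - Pi.single (C' r).1 1).map
                  (ExteriorAlgebra.ι ℚ)).prod := by
          rw [List.map_ofFn, DeltaC]
          refine congrArg _ (congrArg _ (funext fun r => ?_))
          simp [theta, Function.comp]
        rw [hrepr]
        apply pd_prod_zero
        intro v hv
        rw [List.mem_ofFn] at hv
        obtain ⟨r, rfl⟩ := hv
        have h0 := hC.2 0 r.succ (Fin.succ_pos r)
        have hne1 : c ≠ (C' r).2 := by
          rcases h0 with ⟨_, h2, h3⟩ | ⟨_, _, h3⟩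
          · exact ne_of_lt ((hcb.trans_lt h2).trans h3)
          · exact ne_of_lt (hcb.trans_lt h3)
        have hne2 : c ≠ (C' r).1 := by
          rcases h0 with ⟨_, h2, _⟩ | ⟨h1, _, _⟩
          · exact ne_of_lt (hcb.trans_lt h2)
          · exact ne_of_gt (h1.trans_le hac)
        simp [Pi.single_eq_of_ne hne1, Pi.single_eq_of_ne hne2]
      have IH := main_aux n k C' hC'
      have step : ∀ p : Fin n × Fin n,
          pd n p.2 (pd n p.1 (DeltaC C))
            = (m p.1 • pd n p.2 (DeltaC C') - m p.2 • pd n p.1 (DeltaC C'))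
              + ExteriorAlgebra.ι ℚ m * pd n p.2 (pd n p.1 (DeltaC C')) := by
        intro p
        rw [hsplit, pd_iota_mul, map_sub, map_smul, pd_iota_mul]
        abel
      have hm' : ∀ c, m c = (if c = b then (1 : ℚ) else 0) - (if c = a then 1 else 0) := by
        intro c; simp [hm, Pi.single_apply]
      rw [Finset.sum_congr rfl (fun p _ => step p), Finset.sum_add_distrib,
          ← Finset.mul_sum, IH, mul_zero, add_zero]
      exact key_sum a b hab m hm' _ hy


/-- For any non-crossing pairing `C`, `(Σ_{1 ≤ i < j ≤ n} ∂_{θ_j} ∂_{θ_i}) Δ_C = 0`. -/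
theorem stmt12 {n k : ℕ} (C : Fin k → Fin n × Fin n)
    (hC : IsNonCrossingPairing C) :
    (∑ p ∈ Finset.univ.filter (fun p : Fin n × Fin n => p.1 < p.2),
        pd n p.2 ∘ₗ pd n p.1) (DeltaC C) = 0 := by
  rw [LinearMap.coe_sum, Finset.sum_apply]
  simpa using main_aux n k C hC
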